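/- (Dynamic programming recurrence for OSCM) Let G=(U,V,E) be a bipartite graph with a fixed linear ordering π_U of U. Then for every S ⊆ V and every integer k with 1 ≤ k ≤ |S|−1, OPT(S) = min over subsets W ⊆ S with |W| = k of (OPT(W) + OPT(S∖W) + γ(π_U, W, S∖W)), where γ(π_U, W, S∖W) is the number of pairs of edges ((u₁,v₁),(u₂,v₂)) ∈ E(W) × E(S∖W) with π_U(u₂) < π_U(u₁). -/

import Mathlib

open Finset

/-- Two edges `e₁ = (u₁, v₁)` and `e₂ = (u₂, v₂)` of a bipartite graph
`G = (U, V, E ⊆ U × V)` cross in the 2-level drawing `(πU, πV)`: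
`u₁ ≠ u₂`, `v₁ ≠ v₂`, and either `πU u₁ < πU u₂` and `πV v₂ < πV v₁`, or
`πU u₂ < πU u₁` and `πV v₁ < πV v₂`. -/
def Cross {U V : Type*} [Fintype U] [Fintype V]
    (πU : U ≃ Fin (Fintype.card U)) (πV : V ≃ Fin (Fintype.card V))
    (e₁ e₂ : U × V) : Prop :=
  e₁.1 ≠ e₂.1 ∧ e₁.2 ≠ e₂.2 ∧
    ((πU e₁.1 < πU e₂.1 ∧ πV e₂.2 < πV e₁.2) ∨
     (πU e₂.1 < πU e₁.1 ∧ πV e₁.2 < πV e₂.2))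

/-- `E(W)`: the set of edges of `E` whose endpoint in the free layer lies in `W`. -/
noncomputable def edgesIn {U V : Type*} (E : Finset (U × V)) (W : Finset V) :
    Finset (U × V) := by
  classical exact E.filter fun e => e.2 ∈ W

/-- `cr_S(πU, πV)`: the number of distinct unordered pairs of edges of `S` that
cross in `(πU, πV)`.  Since two crossing edges have distinct `U`-endpoints, each
unordered crossing pair is counted exactly once by counting the ordered pairs
`(e₁, e₂)` that cross and satisfy `πU e₁.1 < πU e₂.1`. -/
noncomputable def cr {U V : Type*} [Fintype U] [Fintype V]
    (πU : U ≃ Fin (Fintype.card U)) (πV : V ≃ Fin (Fintype.card V))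
    (S : Finset (U × V)) : ℕ := by
  classical exact
    ((S ×ˢ S).filter fun p => Cross πU πV p.1 p.2 ∧ πU p.1.1 < πU p.2.1).card

/-- `V₁ ≺_{πV} V₂`: every vertex of `V₁` precedes every vertex of `V₂` in `πV`. -/
def Precedes {V : Type*} [Fintype V] (πV : V ≃ Fin (Fintype.card V))
    (V₁ V₂ : Finset V) : Prop :=
  ∀ v₁ ∈ V₁, ∀ v₂ ∈ V₂, πV v₁ < πV v₂

/-- `γ(πU, V₁, V₂)`: the number of pairs of edges
`((u₁, v₁), (u₂, v₂)) ∈ E(V₁) × E(V₂)` with `πU u₂ < πU u₁`; by the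
separability lemma this is the number of crossings between an edge of `E(V₁)`
and an edge of `E(V₂)` in any 2-level drawing `(πU, πV)` with `V₁ ≺_{πV} V₂`. -/
noncomputable def gammaCr {U V : Type*} [Fintype U] (E : Finset (U × V))
    (πU : U ≃ Fin (Fintype.card U)) (V₁ V₂ : Finset V) : ℕ := by
  classical exact
    ((edgesIn E V₁ ×ˢ edgesIn E V₂).filter fun p => πU p.2.1 < πU p.1.1).card

/-- `OPT(S)`: the minimum over all linear orderings `πV` of `V` of
`cr_{E(S)}(πU, πV)`. -/
noncomputable def OPT {U V : Type*} [Fintype U] [Fintype V] (E : Finset (U × V))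
    (πU : U ≃ Fin (Fintype.card U)) (S : Finset V) : ℕ :=
  sInf {c | ∃ πV : V ≃ Fin (Fintype.card V), c = cr πU πV (edgesIn E S)}


section Aux

open Finset

variable {U V : Type*} [Fintype U] [Fintype V]

lemma mem_edgesIn {E : Finset (U × V)} {W : Finset V} {p : U × V} :
    p ∈ edgesIn E W ↔ p ∈ E ∧ p.2 ∈ W := by
  classical
  simp [edgesIn]

lemma cr_eq_card (πU : U ≃ Fin (Fintype.card U)) (πV : V ≃ Fin (Fintype.card V))
    (S : Finset (U × V)) [DecidablePred fun p : (U × V) × (U × V) =>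
      Cross πU πV p.1 p.2 ∧ πU p.1.1 < πU p.2.1] :
    cr πU πV S =
      ((S ×ˢ S).filter fun p => Cross πU πV p.1 p.2 ∧ πU p.1.1 < πU p.2.1).card := by
  unfold cr
  congr

lemma gammaCr_eq_card (E : Finset (U × V)) (πU : U ≃ Fin (Fintype.card U))
    (V₁ V₂ : Finset V) [DecidablePred fun p : (U × V) × (U × V) => πU p.2.1 < πU p.1.1] :
    gammaCr E πU V₁ V₂ =
      ((edgesIn E V₁ ×ˢ edgesIn E V₂).filter fun p => πU p.2.1 < πU p.1.1).card := by
  unfold gammaCr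
  congr

lemma cr_congr (πU : U ≃ Fin (Fintype.card U)) (πV πV' : V ≃ Fin (Fintype.card V))
    (T : Finset (U × V))
    (h : ∀ p ∈ T, ∀ q ∈ T, (πV p.2 < πV q.2 ↔ πV' p.2 < πV' q.2)) :
    cr πU πV T = cr πU πV' T := by
  classical
  rw [cr_eq_card, cr_eq_card]
  congr 1
  apply Finset.filter_congr
  intro p hp
  rw [Finset.mem_product] at hp
  simp only [Cross]
  rw [h p.1 hp.1 p.2 hp.2, h p.2 hp.2 p.1 hp.1]

lemma cr_split [DecidableEq V] (πU : U ≃ Fin (Fintype.card U)) (πV : V ≃ Fin (Fintype.card V))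
    (E : Finset (U × V)) (W W' : Finset V)
    (hd : Disjoint W W') (hprec : Precedes πV W W') :
    cr πU πV (edgesIn E (W ∪ W')) =
      cr πU πV (edgesIn E W) + cr πU πV (edgesIn E W') + gammaCr E πU W W' := by
  classical
  set A := edgesIn E W with hA
  set B := edgesIn E W' with hB
  have hA2 : ∀ p ∈ A, p.2 ∈ W := fun p hp => (mem_edgesIn.mp hp).2
  have hB2 : ∀ p ∈ B, p.2 ∈ W' := fun p hp => (mem_edgesIn.mp hp).2
  have hABdis : ∀ p, p ∈ A → p ∈ B → False := fun p hpA hpB =>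
    Finset.disjoint_left.mp hd (hA2 p hpA) (hB2 p hpB)
  have hUnion : edgesIn E (W ∪ W') = A ∪ B := by
    ext p
    simp only [hA, hB, mem_edgesIn, Finset.mem_union]
    tauto
  set P : (U × V) × (U × V) → Prop :=
    fun p => Cross πU πV p.1 p.2 ∧ πU p.1.1 < πU p.2.1 with hP
  have key : (A ∪ B) ×ˢ (A ∪ B) = (A ×ˢ A ∪ A ×ˢ B) ∪ (B ×ˢ A ∪ B ×ˢ B) := by
    rw [Finset.union_product, Finset.product_union, Finset.product_union]
  have hAB_empty : (A ×ˢ B).filter P = ∅ := by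
    rw [Finset.filter_eq_empty_iff]
    rintro p hp ⟨hcross, hlt⟩
    rw [Finset.mem_product] at hp
    have hv : πV p.1.2 < πV p.2.2 := hprec p.1.2 (hA2 _ hp.1) p.2.2 (hB2 _ hp.2)
    rcases hcross.2.2 with ⟨_, h2⟩ | ⟨h1, _⟩
    · exact absurd hv (lt_asymm h2)
    · exact absurd hlt (lt_asymm h1)
  have hBA_card : ((B ×ˢ A).filter P).card = gammaCr E πU W W' := by
    rw [gammaCr_eq_card]
    apply Finset.card_nbij' (fun p => (p.2, p.1)) (fun p => (p.2, p.1))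
    · rintro p hp
      rw [Finset.mem_coe, Finset.mem_filter, Finset.mem_product] at hp ⊢
      exact ⟨⟨hp.1.2, hp.1.1⟩, hp.2.2⟩
    · rintro p hp
      rw [Finset.mem_coe, Finset.mem_filter, Finset.mem_product] at hp ⊢
      obtain ⟨⟨hp1, hp2⟩, hplt⟩ := hp
      dsimp only
      refine ⟨⟨hp2, hp1⟩, ⟨fun h => hplt.ne (congrArg πU h),
        fun h => Finset.disjoint_left.mp hd (hA2 _ hp1) (h ▸ hB2 _ hp2),
        Or.inl ⟨hplt, hprec p.1.2 (hA2 _ hp1) p.2.2 (hB2 _ hp2)⟩⟩, hplt⟩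
    · intro p _; rfl
    · intro p _; rfl
  have d1 : Disjoint ((A ×ˢ A).filter P)
      (((B ×ˢ A).filter P) ∪ ((B ×ˢ B).filter P)) := by
    rw [Finset.disjoint_left]
    intro p hp hq
    rw [Finset.mem_filter, Finset.mem_product] at hp
    rcases Finset.mem_union.mp hq with hq | hq <;>
      rw [Finset.mem_filter, Finset.mem_product] at hq <;>
      exact hABdis p.1 hp.1.1 hq.1.1
  have d2 : Disjoint ((B ×ˢ A).filter P) ((B ×ˢ B).filter P) := by
    rw [Finset.disjoint_left]
    intro p hp hq
    rw [Finset.mem_filter, Finset.mem_product] at hp hq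
    exact hABdis p.2 hp.1.2 hq.1.2
  rw [hUnion, cr_eq_card, cr_eq_card, cr_eq_card, key]
  rw [Finset.filter_union, Finset.filter_union, Finset.filter_union, hAB_empty,
    Finset.union_empty]
  rw [Finset.card_union_of_disjoint d1, Finset.card_union_of_disjoint d2, hBA_card]
  ring

lemma exists_equiv_of_key {V : Type*} [Fintype V] (g : V → ℕ)
    (hg : Function.Injective g) :
    ∃ πV : V ≃ Fin (Fintype.card V), ∀ v w, πV v < πV w ↔ g v < g w := by
  classical
  set T := Finset.univ.image g with hT
  have hcard : T.card = Fintype.card V := by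
    rw [hT, Finset.card_image_of_injective _ hg, Finset.card_univ]
  let iso : Fin (Fintype.card V) ≃o {x // x ∈ T} := T.orderIsoOfFin hcard
  have hmem : ∀ v : V, g v ∈ T := fun v => by
    rw [hT]; exact Finset.mem_image_of_mem g (Finset.mem_univ v)
  let f : V → {x // x ∈ T} := fun v => ⟨g v, hmem v⟩
  have hfbij : Function.Bijective f := by
    constructor
    · intro a b hab
      exact hg (congrArg Subtype.val hab)
    · rintro ⟨x, hx⟩
      rw [hT, Finset.mem_image] at hx
      obtain ⟨v, _, hv⟩ := hx
      exact ⟨v, Subtype.ext hv⟩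
  refine ⟨(Equiv.ofBijective f hfbij).trans iso.symm.toEquiv, fun v w => ?_⟩
  simp only [Equiv.trans_apply, OrderIso.toEquiv_symm, RelIso.coe_fn_toEquiv]
  refine iso.symm.lt_iff_lt.trans ?_
  exact Iff.rfl

lemma exists_prefix {V : Type*} [Fintype V] [DecidableEq V] (πV : V ≃ Fin (Fintype.card V))
    (S : Finset V) : ∀ k : ℕ, k ≤ S.card →
    ∃ W ⊆ S, W.card = k ∧ Precedes πV W (S \ W) := by
  classical
  intro k
  induction k with
  | zero =>
    intro _
    exact ⟨∅, Finset.empty_subset _, Finset.card_empty, fun v hv => by simp at hv⟩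
  | succ k ih =>
    intro hk
    obtain ⟨W, hWS, hWcard, hWprec⟩ := ih (Nat.le_of_succ_le hk)
    have hne : (S \ W).Nonempty := by
      rw [← Finset.card_pos, Finset.card_sdiff_of_subset hWS, hWcard]
      omega
    obtain ⟨m, hm, hmin⟩ := Finset.exists_min_image (S \ W) (fun v => πV v) hne
    have hmW : m ∉ W := (Finset.mem_sdiff.mp hm).2
    refine ⟨insert m W, ?_, ?_, ?_⟩
    · exact Finset.insert_subset (Finset.mem_sdiff.mp hm).1 hWS
    · rw [Finset.card_insert_of_notMem hmW, hWcard]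
    · intro v₁ hv₁ v₂ hv₂
      rw [Finset.mem_sdiff, Finset.mem_insert] at hv₂
      push_neg at hv₂
      obtain ⟨hv₂S, hv₂m, hv₂W⟩ := hv₂
      have hv₂' : v₂ ∈ S \ W := Finset.mem_sdiff.mpr ⟨hv₂S, hv₂W⟩
      rcases Finset.mem_insert.mp hv₁ with rfl | hv₁W
      · exact lt_of_le_of_ne (hmin v₂ hv₂') (fun h => hv₂m.symm (πV.injective h))
      · exact hWprec v₁ hv₁W v₂ hv₂'

lemma OPT_le (E : Finset (U × V)) (πU : U ≃ Fin (Fintype.card U))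
    (S : Finset V) (πV : V ≃ Fin (Fintype.card V)) :
    OPT E πU S ≤ cr πU πV (edgesIn E S) :=
  Nat.sInf_le ⟨πV, rfl⟩

lemma OPT_spec (E : Finset (U × V)) (πU : U ≃ Fin (Fintype.card U)) (S : Finset V) :
    ∃ πV : V ≃ Fin (Fintype.card V), OPT E πU S = cr πU πV (edgesIn E S) := by
  have hne : {c | ∃ πV : V ≃ Fin (Fintype.card V),
      c = cr πU πV (edgesIn E S)}.Nonempty :=
    ⟨_, Fintype.equivFin V, rfl⟩
  exact Nat.sInf_mem hne

end Aux

open scoped Classical in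
/-- dynamic programming recurrence for OSCM: for every `S ⊆ V`
and every `k` with `1 ≤ k ≤ |S| − 1`,
`OPT(S) = min_{W ⊆ S, |W| = k} (OPT(W) + OPT(S \ W) + γ(πU, W, S \ W))`. -/
theorem OPT_dp_recurrence {U V : Type*} [Fintype U] [Fintype V]
    (E : Finset (U × V)) (πU : U ≃ Fin (Fintype.card U))
    (S : Finset V) (k : ℕ) (hk₁ : 1 ≤ k) (hk₂ : k ≤ S.card - 1) :
    OPT E πU S =
      sInf {c | ∃ W ⊆ S, W.card = k ∧
        c = OPT E πU W + OPT E πU (S \ W) + gammaCr E πU W (S \ W)} := by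
  classical
  have hkS : k ≤ S.card := le_trans hk₂ (Nat.sub_le _ _)
  have hRHSne : {c | ∃ W ⊆ S, W.card = k ∧
      c = OPT E πU W + OPT E πU (S \ W) + gammaCr E πU W (S \ W)}.Nonempty := by
    obtain ⟨W, hWS, hWcard⟩ := Finset.exists_subset_card_eq hkS
    exact ⟨_, W, hWS, hWcard, rfl⟩
  apply le_antisymm
  · -- OPT S ≤ sInf RHS
    apply le_csInf hRHSne
    rintro c ⟨W, hWS, hWcard, rfl⟩
    obtain ⟨π₁, hπ₁⟩ := OPT_spec E πU W
    obtain ⟨π₂, hπ₂⟩ := OPT_spec E πU (S \ W)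
    set eV := Fintype.equivFin V with heV
    set g : V → ℕ := fun v =>
      if v ∈ W then (π₁ v : ℕ) else if v ∈ S then Fintype.card V + (π₂ v : ℕ)
      else 2 * Fintype.card V + (eV v : ℕ) with hgdef
    have hg : Function.Injective g := by
      intro a b hab
      have h1a := (π₁ a).isLt; have h1b := (π₁ b).isLt
      have h2a := (π₂ a).isLt; have h2b := (π₂ b).isLt
      have h3a := (eV a).isLt; have h3b := (eV b).isLt
      simp only [hgdef] at hab
      split_ifs at hab <;>
        first
          | exact π₁.injective (Fin.val_injective hab)
          | exact π₂.injective (Fin.val_injective (by omega))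
          | exact eV.injective (Fin.val_injective (by omega))
          | omega
    obtain ⟨πV, hπV⟩ := exists_equiv_of_key g hg
    have hgW : ∀ v ∈ W, g v = (π₁ v : ℕ) := by
      intro v hv; simp only [hgdef, if_pos hv]
    have hgSW : ∀ v ∈ S \ W, g v = Fintype.card V + (π₂ v : ℕ) := by
      intro v hv
      obtain ⟨hvS, hvW⟩ := Finset.mem_sdiff.mp hv
      simp only [hgdef, if_neg hvW, if_pos hvS]
    have hprec : Precedes πV W (S \ W) := by
      intro v₁ hv₁ v₂ hv₂
      rw [hπV, hgW v₁ hv₁, hgSW v₂ hv₂]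
      have := (π₁ v₁).isLt
      omega
    have hdis : Disjoint W (S \ W) := Finset.disjoint_sdiff
    have hsplit := cr_split πU πV E W (S \ W) hdis hprec
    rw [Finset.union_sdiff_of_subset hWS] at hsplit
    have hcrW : cr πU πV (edgesIn E W) = cr πU π₁ (edgesIn E W) := by
      apply cr_congr
      intro p hp q hq
      rw [hπV, hgW _ (mem_edgesIn.mp hp).2, hgW _ (mem_edgesIn.mp hq).2]
      exact Iff.rfl
    have hcrSW : cr πU πV (edgesIn E (S \ W)) = cr πU π₂ (edgesIn E (S \ W)) := by
      apply cr_congr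
      intro p hp q hq
      rw [hπV, hgSW _ (mem_edgesIn.mp hp).2, hgSW _ (mem_edgesIn.mp hq).2]
      constructor
      · intro h; omega
      · intro h; omega
    calc OPT E πU S ≤ cr πU πV (edgesIn E S) := OPT_le E πU S πV
      _ = OPT E πU W + OPT E πU (S \ W) + gammaCr E πU W (S \ W) := by
          rw [hsplit, hcrW, hcrSW, ← hπ₁, ← hπ₂]
  · -- sInf RHS ≤ OPT S
    obtain ⟨πV, hπV⟩ := OPT_spec E πU S
    obtain ⟨W, hWS, hWcard, hprec⟩ := exists_prefix πV S k hkS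
    have hdis : Disjoint W (S \ W) := Finset.disjoint_sdiff
    have hsplit := cr_split πU πV E W (S \ W) hdis hprec
    rw [Finset.union_sdiff_of_subset hWS] at hsplit
    have h1 : OPT E πU W ≤ cr πU πV (edgesIn E W) := OPT_le E πU W πV
    have h2 : OPT E πU (S \ W) ≤ cr πU πV (edgesIn E (S \ W)) := OPT_le E πU (S \ W) πV
    have hmem : OPT E πU W + OPT E πU (S \ W) + gammaCr E πU W (S \ W) ∈
        {c | ∃ W ⊆ S, W.card = k ∧
          c = OPT E πU W + OPT E πU (S \ W) + gammaCr E πU W (S \ W)} :=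
      ⟨W, hWS, hWcard, rfl⟩
    calc sInf {c | ∃ W ⊆ S, W.card = k ∧
          c = OPT E πU W + OPT E πU (S \ W) + gammaCr E πU W (S \ W)}
        ≤ OPT E πU W + OPT E πU (S \ W) + gammaCr E πU W (S \ W) := Nat.sInf_le hmem
      _ ≤ cr πU πV (edgesIn E S) := by rw [hsplit]; omega
      _ = OPT E πU S := hπV.symm
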